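/- Let X = !![0, √2/2; 0, 0] and Y = !![0, 0; √2/2, 0] be 2×2 real matrices. Then for every real t, exp(t • X) * exp(t • Y) = exp( (2 · arsinh(t/(2√2)) / √(8 + t²)) • !![t, 2√2; 2√2, −t] ), where exp denotes the matrix exponential and arsinh the real inverse hyperbolic sine. (This is the closed form of log(exp(tX̂)exp(tŶ)) in 𝔰𝔩₂(ℝ) used to bound the BCH convergence radius.) -/

import Mathlib

open scoped Classical BigOperators

noncomputable section

open Matrix

set_option maxHeartbeats 1000000

/-- exp of a square-zero matrix. -/
lemma exp_of_sq_zero (A : Matrix (Fin 2) (Fin 2) ℝ) (h : A * A = 0) :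
    NormedSpace.exp A = 1 + A := by
  rw [NormedSpace.exp_eq_tsum (𝕂 := ℝ)]
  have hA2 : A ^ 2 = 0 := by rw [sq]; exact h
  have hzero : ∀ n ∉ Finset.range 2, ((n.factorial : ℝ)⁻¹ • A ^ n) = 0 := by
    intro n hn
    simp only [Finset.mem_range, not_lt] at hn
    obtain ⟨k, rfl⟩ := Nat.exists_eq_add_of_le hn
    rw [pow_add, hA2, zero_mul, smul_zero]
  exact ((hasSum_sum_of_ne_finset_zero hzero).tsum_eq).trans (by
    simp [Finset.sum_range_succ])

/-- exp of a matrix whose square is `(r*r) • 1`, for `r ≠ 0`. -/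
lemma exp_of_sq (A : Matrix (Fin 2) (Fin 2) ℝ) (r : ℝ) (hr : r ≠ 0)
    (h : A * A = (r * r) • (1 : Matrix (Fin 2) (Fin 2) ℝ)) :
    NormedSpace.exp A = Real.cosh r • (1 : Matrix (Fin 2) (Fin 2) ℝ) +
      (Real.sinh r / r) • A := by
  have hA2 : A ^ 2 = (r ^ 2) • 1 := by rw [sq, h, sq]
  have heven : ∀ n : ℕ, A ^ (2 * n) = (r ^ (2 * n)) • (1 : Matrix (Fin 2) (Fin 2) ℝ) := by
    intro n
    rw [pow_mul, hA2, smul_pow, one_pow, ← pow_mul]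
  have hodd : ∀ n : ℕ, A ^ (2 * n + 1) = (r ^ (2 * n)) • A := by
    intro n
    rw [pow_succ, heven, smul_mul_assoc, one_mul]
  rw [NormedSpace.exp_eq_tsum (𝕂 := ℝ)]
  have hc : HasSum (fun n : ℕ => (((2*n).factorial : ℝ)⁻¹ • A ^ (2 * n)))
      (Real.cosh r • (1 : Matrix (Fin 2) (Fin 2) ℝ)) := by
    have := (Real.hasSum_cosh r).smul_const (1 : Matrix (Fin 2) (Fin 2) ℝ)
    convert this using 2 with n
    rw [heven, smul_smul, div_eq_inv_mul]
  have hs : HasSum (fun n : ℕ => (((2*n+1).factorial : ℝ)⁻¹ • A ^ (2 * n + 1)))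
      ((Real.sinh r / r) • A) := by
    have := ((Real.hasSum_sinh r).div_const r).smul_const A
    convert this using 2 with n
    rw [hodd, smul_smul]
    congr 1
    rw [pow_succ]
    field_simp
  exact (HasSum.even_add_odd (f := fun n => ((n.factorial : ℝ)⁻¹ • A ^ n)) hc hs).tsum_eq

theorem exp_mul_exp_sl2 (t : ℝ) :
    NormedSpace.exp (t • (!![0, Real.sqrt 2 / 2; 0, 0] : Matrix (Fin 2) (Fin 2) ℝ)) *
      NormedSpace.exp (t • (!![0, 0; Real.sqrt 2 / 2, 0] : Matrix (Fin 2) (Fin 2) ℝ)) =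
    NormedSpace.exp
      ((2 * Real.arsinh (t / (2 * Real.sqrt 2)) / Real.sqrt (8 + t ^ 2)) •
        (!![t, 2 * Real.sqrt 2; 2 * Real.sqrt 2, -t] : Matrix (Fin 2) (Fin 2) ℝ)) := by
  have h2 : (Real.sqrt 2) ^ 2 = 2 := Real.sq_sqrt (by norm_num)
  have h2pos : (0:ℝ) < Real.sqrt 2 := Real.sqrt_pos.mpr (by norm_num)
  rcases eq_or_ne t 0 with rfl | ht
  · simp
  -- LHS
  have hX : (t • (!![0, Real.sqrt 2 / 2; 0, 0] : Matrix (Fin 2) (Fin 2) ℝ)) *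
      (t • (!![0, Real.sqrt 2 / 2; 0, 0] : Matrix (Fin 2) (Fin 2) ℝ)) = 0 := by
    ext i j
    fin_cases i <;> fin_cases j <;>
      simp [Matrix.mul_apply, Fin.sum_univ_succ]
  have hY : (t • (!![0, 0; Real.sqrt 2 / 2, 0] : Matrix (Fin 2) (Fin 2) ℝ)) *
      (t • (!![0, 0; Real.sqrt 2 / 2, 0] : Matrix (Fin 2) (Fin 2) ℝ)) = 0 := by
    ext i j
    fin_cases i <;> fin_cases j <;>
      simp [Matrix.mul_apply, Fin.sum_univ_succ]
  rw [exp_of_sq_zero _ hX, exp_of_sq_zero _ hY]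
  -- RHS setup
  set s : ℝ := t / (2 * Real.sqrt 2) with hs
  have hsne : s ≠ 0 := by
    simp only [hs, div_ne_zero_iff]
    exact ⟨ht, by positivity⟩
  set c : ℝ := 2 * Real.arsinh s / Real.sqrt (8 + t ^ 2) with hc
  set A : Matrix (Fin 2) (Fin 2) ℝ :=
    c • (!![t, 2 * Real.sqrt 2; 2 * Real.sqrt 2, -t] : Matrix (Fin 2) (Fin 2) ℝ) with hA
  have hsq8 : Real.sqrt (8 + t ^ 2) ^ 2 = 8 + t ^ 2 := Real.sq_sqrt (by positivity)
  have hsq8pos : (0:ℝ) < Real.sqrt (8 + t ^ 2) := Real.sqrt_pos.mpr (by positivity)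
  set R : ℝ := 2 * Real.arsinh s with hR
  have hRne : R ≠ 0 := by
    simp only [hR, mul_ne_zero_iff]
    exact ⟨two_ne_zero, by simpa [Real.arsinh_eq_zero_iff] using hsne⟩
  have hcR : c * Real.sqrt (8 + t ^ 2) = R := by
    rw [hc]
    field_simp
  have hAA : A * A = (R * R) • (1 : Matrix (Fin 2) (Fin 2) ℝ) := by
    have hMM : (!![t, 2 * Real.sqrt 2; 2 * Real.sqrt 2, -t] : Matrix (Fin 2) (Fin 2) ℝ) *
        !![t, 2 * Real.sqrt 2; 2 * Real.sqrt 2, -t] =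
        (8 + t ^ 2) • (1 : Matrix (Fin 2) (Fin 2) ℝ) := by
      ext i j
      fin_cases i <;> fin_cases j <;>
        simp [Matrix.mul_apply, Fin.sum_univ_succ, Matrix.one_apply] <;> nlinarith [h2]
    rw [hA, smul_mul_smul_comm, hMM, smul_smul, ← hcR]
    congr 1
    nlinarith [hsq8]
  rw [exp_of_sq A R hRne hAA]
  -- key scalar identities
  have harc : Real.sinh (Real.arsinh s) = s := Real.sinh_arsinh s
  have hccosh : Real.cosh (Real.arsinh s) = Real.sqrt (1 + s ^ 2) := Real.cosh_arsinh s
  have h1s : (0:ℝ) < Real.sqrt (1 + s ^ 2) := Real.sqrt_pos.mpr (by positivity)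
  have h1ssq : Real.sqrt (1 + s ^ 2) ^ 2 = 1 + s ^ 2 := Real.sq_sqrt (by positivity)
  have hcoshR : Real.cosh R = 1 + t ^ 2 / 4 := by
    rw [hR, Real.cosh_two_mul, hccosh, h1ssq, harc, hs]
    field_simp
    nlinarith [h2]
  have hsinhR : Real.sinh R = 2 * s * Real.sqrt (1 + s ^ 2) := by
    rw [hR, Real.sinh_two_mul, harc, hccosh]
  -- relation between sqrt(8+t^2) and sqrt(1+s^2)
  have h8 : (2 * Real.sqrt 2) ^ 2 = 8 := by nlinarith [h2]
  have hs2 : s ^ 2 = t ^ 2 / 8 := by rw [hs, div_pow, h8]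
  have hsqrt8 : Real.sqrt 8 = 2 * Real.sqrt 2 := by
    rw [show (8:ℝ) = (2 * Real.sqrt 2) ^ 2 from h8.symm, Real.sqrt_sq (by positivity)]
  have hsqrel : Real.sqrt (8 + t ^ 2) = 2 * Real.sqrt 2 * Real.sqrt (1 + s ^ 2) := by
    rw [show (8:ℝ) + t ^ 2 = 8 * (1 + s ^ 2) by rw [hs2]; ring,
      Real.sqrt_mul (by norm_num), hsqrt8]
  have hcoef : Real.sinh R / R * c = t / 4 := by
    rw [hsinhR, hc, hsqrel, hs]
    field_simp
    linear_combination (-2) * h2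
  -- finish entrywise
  have hsmul : (Real.sinh R / R) • A =
      (Real.sinh R / R * c) • (!![t, 2 * Real.sqrt 2; 2 * Real.sqrt 2, -t] :
        Matrix (Fin 2) (Fin 2) ℝ) := by
    rw [hA, smul_smul]
  rw [hsmul, hcoef, hcoshR]
  ext i j
  fin_cases i <;> fin_cases j <;>
    simp [Matrix.mul_apply, Fin.sum_univ_succ, Matrix.one_apply, Matrix.add_apply] <;>
    nlinarith [h2]

end
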